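/- For the mixed bilinear form A_M, for any pair (y,w) in Y × W one has A_M((y,w),(y,w)) = ∫₀^T ∫_Ω ( y_t² + (1/α) y² + w² ) dx dt + ∫_Ω ν |∇y(T)|² dx, and consequently A_M((y,w),(y,w)) ≥ |||(y,w)|||², where |||(y,w)|||² = ∫₀^T ∫_Ω ( y_t² + (1/α) y² + w² ) dx dt. -/

import Mathlib

open MeasureTheory

/-- Diagonal identity and coercivity for the mixed bilinear form `A_M`:
`A_M((y,w),(y,w)) = ∫∫ y_t² + (1/α) y² + w² + ∫ ν |∇y(T)|² ≥ |||(y,w)|||²`. -/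
theorem stmt_3 {XT Ωs : Type*} [MeasurableSpace XT] [MeasurableSpace Ωs]
    (μ : Measure XT) (σ : Measure Ωs) {n : ℕ}
    (ν α : ℝ) (hν : 0 < ν) (hα : 0 < α)
    (y yt w : XT → ℝ) (grady gradw : XT → EuclideanSpace ℝ (Fin n))
    (gradyT : Ωs → EuclideanSpace ℝ (Fin n)) :
    ((∫ x, (yt x * yt x + ν * (inner ℝ (gradw x) (grady x) : ℝ) + (1/α) * (y x * y x)
          - ν * (inner ℝ (grady x) (gradw x) : ℝ) + w x * w x) ∂μ)
        + ∫ ω, ν * (inner ℝ (gradyT ω) (gradyT ω) : ℝ) ∂σ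
      = (∫ x, ((yt x)^2 + (1/α) * (y x)^2 + (w x)^2) ∂μ)
        + ∫ ω, ν * ‖gradyT ω‖^2 ∂σ) ∧
    ((∫ x, ((yt x)^2 + (1/α) * (y x)^2 + (w x)^2) ∂μ)
      ≤ (∫ x, (yt x * yt x + ν * (inner ℝ (gradw x) (grady x) : ℝ) + (1/α) * (y x * y x)
          - ν * (inner ℝ (grady x) (gradw x) : ℝ) + w x * w x) ∂μ)
        + ∫ ω, ν * (inner ℝ (gradyT ω) (gradyT ω) : ℝ) ∂σ) := by
  have h1 : (∫ x, (yt x * yt x + ν * (inner ℝ (gradw x) (grady x) : ℝ) + (1/α) * (y x * y x)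
          - ν * (inner ℝ (grady x) (gradw x) : ℝ) + w x * w x) ∂μ)
      = ∫ x, ((yt x)^2 + (1/α) * (y x)^2 + (w x)^2) ∂μ := by
    congr 1; funext x
    rw [real_inner_comm (gradw x) (grady x)]; ring
  have h2 : (∫ ω, ν * (inner ℝ (gradyT ω) (gradyT ω) : ℝ) ∂σ)
      = ∫ ω, ν * ‖gradyT ω‖^2 ∂σ := by
    congr 1; funext ω
    rw [real_inner_self_eq_norm_sq]
  refine ⟨by rw [h1, h2], ?_⟩
  rw [h1, h2]
  have : 0 ≤ ∫ ω, ν * ‖gradyT ω‖^2 ∂σ :=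
    integral_nonneg fun ω => mul_nonneg hν.le (sq_nonneg _)
  linarith
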